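/- Let H be the 2⁷×2⁷ Hamiltonian of the seven-qubit toric code model on a disk: H = −∑_{i=1}^{6} A_i − ∑_{j=1}^{2} B_j, where A₁ = σ_z⊗σ_z⊗1⊗1⊗1⊗1⊗1, A₂ = σ_z⊗1⊗σ_z⊗1⊗1⊗1⊗1, A₃ = 1⊗σ_z⊗1⊗σ_z⊗σ_z⊗1⊗1, A₄ = 1⊗1⊗σ_z⊗σ_z⊗1⊗σ_z⊗1, A₅ = 1⊗1⊗1⊗1⊗σ_z⊗1⊗σ_z, A₆ = 1⊗1⊗1⊗1⊗1⊗σ_z⊗σ_z, B₁ = σ_x⊗σ_x⊗σ_x⊗σ_x⊗1⊗1⊗1, B₂ = 1⊗1⊗1⊗σ_x⊗σ_x⊗σ_x⊗σ_x. Let ψ be the seven-qubit state |ψ⟩₇ with equal coefficients α₁ = α₂ = α₃ = α₄ = 1/2. Then H·ψ = −8·ψ, and ψ is a ground state: for every φ ∈ (Fin 7 → Fin 2) → ℂ, Re⟪φ, H·φ⟫ ≥ −8·‖φ‖². -/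

import Mathlib

open Matrix Complex Polynomial
open scoped ComplexOrder

noncomputable section

/-- The three Pauli matrices σ_x, σ_y, σ_z. -/
def pauli : Fin 3 → Matrix (Fin 2) (Fin 2) ℂ :=
  ![!![0, 1; 1, 0], !![0, -Complex.I; Complex.I, 0], !![1, 0; 0, -1]]

/-- Kronecker product of `n` 2×2 matrices, as a matrix on `(Fin n → Fin 2)`. -/
def kron {n : ℕ} (M : Fin n → Matrix (Fin 2) (Fin 2) ℂ) :
    Matrix (Fin n → Fin 2) (Fin n → Fin 2) ℂ :=
  Matrix.of fun f g => ∏ k, M k (f k) (g k)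

/-- The bit string 0000000. -/
def w₁ : Fin 7 → Fin 2 := ![0, 0, 0, 0, 0, 0, 0]
/-- The bit string 0001111. -/
def w₂ : Fin 7 → Fin 2 := ![0, 0, 0, 1, 1, 1, 1]
/-- The bit string 1111000. -/
def w₃ : Fin 7 → Fin 2 := ![1, 1, 1, 1, 0, 0, 0]
/-- The bit string 1110111. -/
def w₄ : Fin 7 → Fin 2 := ![1, 1, 1, 0, 1, 1, 1]

/-- The seven-qubit state `|ψ⟩₇ = α₁|0000000⟩ + α₂|0001111⟩ + α₃|1111000⟩ + α₄|1110111⟩`. -/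
def psi7 (α₁ α₂ α₃ α₄ : ℝ) : (Fin 7 → Fin 2) → ℂ := fun f =>
  (if f = w₁ then (α₁ : ℂ) else 0) + (if f = w₂ then (α₂ : ℂ) else 0)
    + (if f = w₃ then (α₃ : ℂ) else 0) + (if f = w₄ then (α₄ : ℂ) else 0)

/-- The density matrix `ρ(f,g) = ψ(f)·conj(ψ(g))` of `|ψ⟩₇`. -/
def rho7 (α₁ α₂ α₃ α₄ : ℝ) : Matrix (Fin 7 → Fin 2) (Fin 7 → Fin 2) ℂ :=
  Matrix.of fun f g => psi7 α₁ α₂ α₃ α₄ f * (starRingEnd ℂ) (psi7 α₁ α₂ α₃ α₄ g)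

/-- The reduced density matrix of region `A` (the seventh qubit): partial trace of
`ρ` over the first six qubits. -/
def rhoA7 (α₁ α₂ α₃ α₄ : ℝ) : Matrix (Fin 2) (Fin 2) ℂ :=
  Matrix.of fun a a' =>
    ∑ b : Fin 6 → Fin 2, rho7 α₁ α₂ α₃ α₄ (Fin.snoc b a) (Fin.snoc b a')

/-- σ_z. -/
def sz : Matrix (Fin 2) (Fin 2) ℂ := !![1, 0; 0, -1]
/-- σ_x. -/
def sx : Matrix (Fin 2) (Fin 2) ℂ := !![0, 1; 1, 0]
/-- 2×2 identity. -/
def id2 : Matrix (Fin 2) (Fin 2) ℂ := 1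

/-- The Hamiltonian of the seven-qubit toric code model on a disk:
`H = −∑_{i=1}^{6} A_i − ∑_{j=1}^{2} B_j`. -/
def H7td : Matrix (Fin 7 → Fin 2) (Fin 7 → Fin 2) ℂ :=
  -(kron ![sz, sz, id2, id2, id2, id2, id2]
    + kron ![sz, id2, sz, id2, id2, id2, id2]
    + kron ![id2, sz, id2, sz, sz, id2, id2]
    + kron ![id2, id2, sz, sz, id2, sz, id2]
    + kron ![id2, id2, id2, id2, sz, id2, sz]
    + kron ![id2, id2, id2, id2, id2, sz, sz])
  - (kron ![sx, sx, sx, sx, id2, id2, id2]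
    + kron ![id2, id2, id2, sx, sx, sx, sx])

/-! ### Auxiliary machinery: Kronecker products of signed permutation matrices -/

lemma kron_mulVec {n : ℕ} (p : Fin n → Fin 2 → Fin 2) (s : Fin n → Fin 2 → ℂ)
    (M : Fin n → Matrix (Fin 2) (Fin 2) ℂ)
    (hM : ∀ k i j, M k i j = if j = p k i then s k i else 0)
    (φ : (Fin n → Fin 2) → ℂ) (f : Fin n → Fin 2) :
    (kron M).mulVec φ f = (∏ k, s k (f k)) * φ (fun k => p k (f k)) := by
  have key : ∀ g, (kron M) f g * φ g
      = (if g = (fun k => p k (f k)) then (∏ k, s k (f k)) * φ g else 0) := by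
    intro g
    by_cases h : g = fun k => p k (f k)
    · subst h
      rw [if_pos rfl]
      congr 1
      unfold kron
      rw [Matrix.of_apply]
      refine Finset.prod_congr rfl fun k _ => ?_
      rw [hM, if_pos rfl]
    · rw [if_neg h]
      obtain ⟨k, hk⟩ : ∃ k, g k ≠ p k (f k) := by
        by_contra hc
        push_neg at hc
        exact h (funext hc)
      have hz : M k (f k) (g k) = 0 := by rw [hM, if_neg hk]
      unfold kron
      rw [Matrix.of_apply, Finset.prod_eq_zero (Finset.mem_univ k) hz, zero_mul]
  unfold Matrix.mulVec dotProduct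
  rw [Finset.sum_congr rfl fun g _ => key g, Finset.sum_ite_eq' Finset.univ
    (fun k => p k (f k)) (fun g => (∏ k, s k (f k)) * φ g), if_pos (Finset.mem_univ _)]

lemma prod_pm {n : ℕ} (v : Fin n → ℂ) (h : ∀ k, v k = 1 ∨ v k = -1) :
    (∏ k, v k) = 1 ∨ (∏ k, v k) = -1 := by
  induction n with
  | zero => left; simp
  | succ m ih =>
      rw [Fin.prod_univ_succ]
      rcases h 0 with h0 | h0 <;> rcases ih (fun k => v k.succ) (fun k => h k.succ) with h1 | h1 <;>
        simp [h0, h1]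

lemma pm_re (z a b : ℂ) (hz : z = 1 ∨ z = -1) :
    ((starRingEnd ℂ) a * (z * b)).re ≤ (Complex.normSq a + Complex.normSq b) / 2 := by
  have h1 : |((starRingEnd ℂ) a * b).re| ≤ ‖a‖ * ‖b‖ := by
    calc |((starRingEnd ℂ) a * b).re| ≤ ‖(starRingEnd ℂ) a * b‖ :=
          Complex.abs_re_le_norm _
      _ = ‖a‖ * ‖b‖ := by rw [norm_mul, Complex.norm_conj]
  have h2 : ‖a‖ * ‖b‖ ≤ (Complex.normSq a + Complex.normSq b) / 2 := by
    rw [← Complex.sq_norm, ← Complex.sq_norm]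
    nlinarith [sq_nonneg (‖a‖ - ‖b‖)]
  rcases hz with rfl | rfl
  · rw [one_mul]
    exact le_trans (le_trans (le_abs_self _) h1) h2
  · rw [neg_one_mul, mul_neg, Complex.neg_re]
    exact le_trans (le_trans (neg_le_abs _) h1) h2

lemma term_bound {n : ℕ} (p : Fin n → Fin 2 → Fin 2) (s : Fin n → Fin 2 → ℂ)
    (M : Fin n → Matrix (Fin 2) (Fin 2) ℂ)
    (hM : ∀ k i j, M k i j = if j = p k i then s k i else 0)
    (hp : ∀ k, Function.Involutive (p k))
    (hs : ∀ k i, s k i = 1 ∨ s k i = -1)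
    (φ : (Fin n → Fin 2) → ℂ) :
    (star φ ⬝ᵥ (kron M).mulVec φ).re ≤ ∑ f, Complex.normSq (φ f) := by
  have hinv : Function.Involutive (fun f k => p k (f k)) := by
    intro f; funext k; exact hp k (f k)
  have hform : star φ ⬝ᵥ (kron M).mulVec φ
      = ∑ f, (starRingEnd ℂ) (φ f) * ((∏ k, s k (f k)) * φ (fun k => p k (f k))) := by
    unfold dotProduct
    refine Finset.sum_congr rfl fun f _ => ?_
    rw [kron_mulVec p s M hM, Pi.star_apply, RCLike.star_def]
  rw [hform, Complex.re_sum]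
  have step : ∀ f, ((starRingEnd ℂ) (φ f) * ((∏ k, s k (f k)) * φ (fun k => p k (f k)))).re
      ≤ (Complex.normSq (φ f) + Complex.normSq (φ (fun k => p k (f k)))) / 2 := fun f =>
    pm_re _ _ _ (prod_pm _ (fun k => hs k (f k)))
  calc ∑ f, ((starRingEnd ℂ) (φ f) * ((∏ k, s k (f k)) * φ (fun k => p k (f k)))).re
      ≤ ∑ f, (Complex.normSq (φ f) + Complex.normSq (φ (fun k => p k (f k)))) / 2 :=
        Finset.sum_le_sum fun f _ => step f
    _ = ((∑ f, Complex.normSq (φ f))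
          + ∑ g : Fin n → Fin 2, Complex.normSq (φ ((fun f k => p k (f k)) g))) / 2 := by
        rw [← Finset.sum_add_distrib, Finset.sum_div]
    _ = ∑ f, Complex.normSq (φ f) := by
        have := Equiv.sum_comp (Function.Involutive.toPerm _ hinv)
          (fun f => Complex.normSq (φ f))
        simp only [Function.Involutive.coe_toPerm] at this
        rw [this]
        ring

/-- The four basis strings of the state, as a single family. -/
def W : Fin 4 → (Fin 7 → Fin 2) := ![w₁, w₂, w₃, w₄]

lemma psi7_eq (c : ℝ) (f : Fin 7 → Fin 2) :
    psi7 c c c c f = ∑ j : Fin 4, if f = W j then (c : ℂ) else 0 := by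
  rw [Fin.sum_univ_four]
  rfl

lemma eig_one (p : Fin 7 → Fin 2 → Fin 2) (s : Fin 7 → Fin 2 → ℂ)
    (M : Fin 7 → Matrix (Fin 2) (Fin 2) ℂ)
    (hM : ∀ k i j, M k i j = if j = p k i then s k i else 0)
    (hp : ∀ k, Function.Involutive (p k))
    (σ : Equiv.Perm (Fin 4))
    (hPw : ∀ j, (fun k => p k (W j k)) = W (σ j))
    (hS : ∀ j, (∏ k, s k (W j k)) = 1) (c : ℝ) :
    (kron M).mulVec (psi7 c c c c) = psi7 c c c c := by
  have hinv : Function.Involutive (fun f k => p k (f k)) := by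
    intro f; funext k; exact hp k (f k)
  funext f
  rw [kron_mulVec p s M hM, psi7_eq, psi7_eq]
  have hiff : ∀ j, ((fun k => p k (f k)) = W j) ↔ f = W (σ j) := by
    intro j
    have hcomp : ∀ k, p k (W j k) = W (σ j) k := fun k => congrFun (hPw j) k
    constructor
    · intro h
      funext k
      have h1 : p k (f k) = W j k := congrFun h k
      calc f k = p k (p k (f k)) := (hp k (f k)).symm
        _ = p k (W j k) := by rw [h1]
        _ = W (σ j) k := hcomp k
    · intro h
      funext k
      calc p k (f k) = p k (W (σ j) k) := by rw [h]
        _ = p k (p k (W j k)) := by rw [hcomp k]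
        _ = W j k := hp k _
  rw [Finset.mul_sum]
  have hterm : ∀ j : Fin 4, (∏ k, s k (f k)) * (if (fun k => p k (f k)) = W j then (c:ℂ) else 0)
      = if f = W (σ j) then (c:ℂ) else 0 := by
    intro j
    rw [if_congr (hiff j) rfl rfl]
    split_ifs with h
    · rw [h, hS (σ j), one_mul]
    · rw [mul_zero]
  rw [Finset.sum_congr rfl fun j _ => hterm j]
  exact Equiv.sum_comp σ (fun j => if f = W j then (c:ℂ) else 0)

/-! ### Descriptors of the stabilizer terms -/

def pI : Fin 2 → Fin 2 := id
def pX : Fin 2 → Fin 2 := ![1, 0]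
def cI : Fin 2 → ℂ := fun _ => 1
def cZ : Fin 2 → ℂ := ![1, -1]

lemma hsz : ∀ i j, sz i j = if j = pI i then cZ i else 0 := by
  intro i j; fin_cases i <;> fin_cases j <;> simp [sz, pI, cZ]

lemma hsx : ∀ i j, sx i j = if j = pX i then cI i else 0 := by
  intro i j; fin_cases i <;> fin_cases j <;> simp [sx, pX, cI]

lemma hid : ∀ i j, id2 i j = if j = pI i then cI i else 0 := by
  intro i j; fin_cases i <;> fin_cases j <;> simp [id2, pI, cI, Matrix.one_apply]

def pA : Fin 7 → Fin 2 → Fin 2 := fun _ => pI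
def pB1 : Fin 7 → Fin 2 → Fin 2 := ![pX, pX, pX, pX, pI, pI, pI]
def pB2 : Fin 7 → Fin 2 → Fin 2 := ![pI, pI, pI, pX, pX, pX, pX]
def sA1 : Fin 7 → Fin 2 → ℂ := ![cZ, cZ, cI, cI, cI, cI, cI]
def sA2 : Fin 7 → Fin 2 → ℂ := ![cZ, cI, cZ, cI, cI, cI, cI]
def sA3 : Fin 7 → Fin 2 → ℂ := ![cI, cZ, cI, cZ, cZ, cI, cI]
def sA4 : Fin 7 → Fin 2 → ℂ := ![cI, cI, cZ, cZ, cI, cZ, cI]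
def sA5 : Fin 7 → Fin 2 → ℂ := ![cI, cI, cI, cI, cZ, cI, cZ]
def sA6 : Fin 7 → Fin 2 → ℂ := ![cI, cI, cI, cI, cI, cZ, cZ]
def sB : Fin 7 → Fin 2 → ℂ := fun _ => cI

lemma hM1 : ∀ k i j, (![sz, sz, id2, id2, id2, id2, id2] k) i j
    = if j = pA k i then sA1 k i else 0 := by
  intro k; fin_cases k <;> first | exact hsz | exact hsx | exact hid
lemma hM2 : ∀ k i j, (![sz, id2, sz, id2, id2, id2, id2] k) i j
    = if j = pA k i then sA2 k i else 0 := by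
  intro k; fin_cases k <;> first | exact hsz | exact hsx | exact hid
lemma hM3 : ∀ k i j, (![id2, sz, id2, sz, sz, id2, id2] k) i j
    = if j = pA k i then sA3 k i else 0 := by
  intro k; fin_cases k <;> first | exact hsz | exact hsx | exact hid
lemma hM4 : ∀ k i j, (![id2, id2, sz, sz, id2, sz, id2] k) i j
    = if j = pA k i then sA4 k i else 0 := by
  intro k; fin_cases k <;> first | exact hsz | exact hsx | exact hid
lemma hM5 : ∀ k i j, (![id2, id2, id2, id2, sz, id2, sz] k) i j
    = if j = pA k i then sA5 k i else 0 := by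
  intro k; fin_cases k <;> first | exact hsz | exact hsx | exact hid
lemma hM6 : ∀ k i j, (![id2, id2, id2, id2, id2, sz, sz] k) i j
    = if j = pA k i then sA6 k i else 0 := by
  intro k; fin_cases k <;> first | exact hsz | exact hsx | exact hid
lemma hM7 : ∀ k i j, (![sx, sx, sx, sx, id2, id2, id2] k) i j
    = if j = pB1 k i then sB k i else 0 := by
  intro k; fin_cases k <;> first | exact hsz | exact hsx | exact hid
lemma hM8 : ∀ k i j, (![id2, id2, id2, sx, sx, sx, sx] k) i j
    = if j = pB2 k i then sB k i else 0 := by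
  intro k; fin_cases k <;> first | exact hsz | exact hsx | exact hid

lemma hpA : ∀ k, Function.Involutive (pA k) := fun _ _ => rfl
lemma hpB1 : ∀ k, Function.Involutive (pB1 k) := by
  have h : ∀ k x, pB1 k (pB1 k x) = x := by decide
  exact fun k => h k
lemma hpB2 : ∀ k, Function.Involutive (pB2 k) := by
  have h : ∀ k x, pB2 k (pB2 k x) = x := by decide
  exact fun k => h k

lemma hsA1 : ∀ k i, sA1 k i = 1 ∨ sA1 k i = -1 := by
  intro k i; fin_cases k <;> fin_cases i <;> norm_num [sA1, cZ, cI]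
lemma hsA2 : ∀ k i, sA2 k i = 1 ∨ sA2 k i = -1 := by
  intro k i; fin_cases k <;> fin_cases i <;> norm_num [sA2, cZ, cI]
lemma hsA3 : ∀ k i, sA3 k i = 1 ∨ sA3 k i = -1 := by
  intro k i; fin_cases k <;> fin_cases i <;> norm_num [sA3, cZ, cI]
lemma hsA4 : ∀ k i, sA4 k i = 1 ∨ sA4 k i = -1 := by
  intro k i; fin_cases k <;> fin_cases i <;> norm_num [sA4, cZ, cI]
lemma hsA5 : ∀ k i, sA5 k i = 1 ∨ sA5 k i = -1 := by
  intro k i; fin_cases k <;> fin_cases i <;> norm_num [sA5, cZ, cI]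
lemma hsA6 : ∀ k i, sA6 k i = 1 ∨ sA6 k i = -1 := by
  intro k i; fin_cases k <;> fin_cases i <;> norm_num [sA6, cZ, cI]
lemma hsB : ∀ k i, sB k i = 1 ∨ sB k i = -1 := fun _ _ => Or.inl rfl

def σB1 : Equiv.Perm (Fin 4) := (Equiv.swap 0 2).trans (Equiv.swap 1 3)
def σB2 : Equiv.Perm (Fin 4) := (Equiv.swap 0 1).trans (Equiv.swap 2 3)

lemma hPwA : ∀ j, (fun k => pA k (W j k)) = W ((Equiv.refl (Fin 4)) j) := by decide
lemma hPwB1 : ∀ j, (fun k => pB1 k (W j k)) = W (σB1 j) := by decide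
lemma hPwB2 : ∀ j, (fun k => pB2 k (W j k)) = W (σB2 j) := by decide

lemma hSA1 : ∀ j, (∏ k, sA1 k (W j k)) = 1 := by
  intro j; fin_cases j <;> norm_num [Fin.prod_univ_succ, sA1, cZ, cI, W, w₁, w₂, w₃, w₄]
lemma hSA2 : ∀ j, (∏ k, sA2 k (W j k)) = 1 := by
  intro j; fin_cases j <;> norm_num [Fin.prod_univ_succ, sA2, cZ, cI, W, w₁, w₂, w₃, w₄]
lemma hSA3 : ∀ j, (∏ k, sA3 k (W j k)) = 1 := by
  intro j; fin_cases j <;> norm_num [Fin.prod_univ_succ, sA3, cZ, cI, W, w₁, w₂, w₃, w₄]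
lemma hSA4 : ∀ j, (∏ k, sA4 k (W j k)) = 1 := by
  intro j; fin_cases j <;> norm_num [Fin.prod_univ_succ, sA4, cZ, cI, W, w₁, w₂, w₃, w₄]
lemma hSA5 : ∀ j, (∏ k, sA5 k (W j k)) = 1 := by
  intro j; fin_cases j <;> norm_num [Fin.prod_univ_succ, sA5, cZ, cI, W, w₁, w₂, w₃, w₄]
lemma hSA6 : ∀ j, (∏ k, sA6 k (W j k)) = 1 := by
  intro j; fin_cases j <;> norm_num [Fin.prod_univ_succ, sA6, cZ, cI, W, w₁, w₂, w₃, w₄]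
lemma hSB : ∀ j, (∏ k, sB k (W j k)) = 1 := by
  intro j; simp [sB, cI]

/-- The seven-qubit state `|ψ⟩₇` with equal coefficients `1/2` is an eigenvector of
the toric-code Hamiltonian `H` with eigenvalue `−8`, and it is a ground state:
`Re⟪φ, Hφ⟫ ≥ −8‖φ‖²` for every `φ`. -/
theorem toric_code_ground_state :
    H7td.mulVec (psi7 (1/2) (1/2) (1/2) (1/2)) =
      (-8 : ℂ) • psi7 (1/2) (1/2) (1/2) (1/2) ∧
    ∀ φ : (Fin 7 → Fin 2) → ℂ,
      -8 * ∑ f, Complex.normSq (φ f) ≤ (star φ ⬝ᵥ H7td.mulVec φ).re := by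
  constructor
  · have e1 := eig_one pA sA1 _ hM1 hpA (Equiv.refl _) hPwA hSA1 (1/2)
    have e2 := eig_one pA sA2 _ hM2 hpA (Equiv.refl _) hPwA hSA2 (1/2)
    have e3 := eig_one pA sA3 _ hM3 hpA (Equiv.refl _) hPwA hSA3 (1/2)
    have e4 := eig_one pA sA4 _ hM4 hpA (Equiv.refl _) hPwA hSA4 (1/2)
    have e5 := eig_one pA sA5 _ hM5 hpA (Equiv.refl _) hPwA hSA5 (1/2)
    have e6 := eig_one pA sA6 _ hM6 hpA (Equiv.refl _) hPwA hSA6 (1/2)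
    have e7 := eig_one pB1 sB _ hM7 hpB1 σB1 hPwB1 hSB (1/2)
    have e8 := eig_one pB2 sB _ hM8 hpB2 σB2 hPwB2 hSB (1/2)
    rw [H7td, Matrix.sub_mulVec, Matrix.neg_mulVec]
    simp only [Matrix.add_mulVec]
    rw [e1, e2, e3, e4, e5, e6, e7, e8]
    funext f
    simp only [Pi.smul_apply, Pi.sub_apply, Pi.neg_apply, Pi.add_apply, smul_eq_mul]
    ring
  · intro φ
    have b1 := term_bound pA sA1 _ hM1 hpA hsA1 φ
    have b2 := term_bound pA sA2 _ hM2 hpA hsA2 φ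
    have b3 := term_bound pA sA3 _ hM3 hpA hsA3 φ
    have b4 := term_bound pA sA4 _ hM4 hpA hsA4 φ
    have b5 := term_bound pA sA5 _ hM5 hpA hsA5 φ
    have b6 := term_bound pA sA6 _ hM6 hpA hsA6 φ
    have b7 := term_bound pB1 sB _ hM7 hpB1 hsB φ
    have b8 := term_bound pB2 sB _ hM8 hpB2 hsB φ
    rw [H7td, Matrix.sub_mulVec, Matrix.neg_mulVec]
    simp only [Matrix.add_mulVec, dotProduct_sub, dotProduct_neg,
      dotProduct_add, Complex.sub_re, Complex.neg_re, Complex.add_re]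
    linarith
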